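/- Let d ≥ 1 and for Δ ≥ 0 let V_1(Δ) denote the Lebesgue volume of the intersection of two closed unit balls in ℝ^d whose centers are at distance Δ from each other. Then for every Δ ∈ (0, 2), the function V_1 is differentiable at Δ with derivative V_1′(Δ) = −ω_{d−1} (1 − Δ²/4)^{(d−1)/2}. -/

import Mathlib

open MeasureTheory Metric

/-- `ω k`: the Lebesgue volume of the closed unit ball in `ℝ^k` (with `ω 0 = 1`). -/
noncomputable def unitBallVol (k : ℕ) : ℝ :=
  (volume (closedBall (0 : EuclideanSpace ℝ (Fin k)) 1)).toReal

/-- `V₁ d Δ`: the Lebesgue volume of the intersection of two closed unit balls in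
`ℝ^d` (`d ≥ 1`) whose centers are at distance `Δ` from each other (for `Δ ≥ 0`). -/
noncomputable def V₁ (d : ℕ) (hd : 0 < d) (Δ : ℝ) : ℝ :=
  (volume (closedBall (0 : EuclideanSpace ℝ (Fin d)) 1 ∩
    closedBall (EuclideanSpace.single (⟨0, hd⟩ : Fin d) Δ) 1)).toReal

lemma cont_rpow_const {p : ℝ} (hp : 0 ≤ p) : Continuous fun c : ℝ => c ^ p := by
  rw [continuous_iff_continuousAt]
  exact fun x => Real.continuousAt_rpow_const x p (Or.inr hp)

lemma euc_symm_apply (n : ℕ) (y : Fin n → ℝ) (i : Fin n) :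
    (MeasurableEquiv.toLp 2 (Fin n → ℝ)) y i = y i := rfl

lemma mem_cb_iff (m : ℕ) (x : Fin m → ℝ) (z : EuclideanSpace ℝ (Fin m)) :
    (MeasurableEquiv.toLp 2 (Fin m → ℝ)) x ∈ closedBall z 1
      ↔ ∑ i, (x i - z i) ^ 2 ≤ 1 := by
  rw [mem_closedBall, EuclideanSpace.dist_eq]
  have : ∀ i, dist ((MeasurableEquiv.toLp 2 (Fin m → ℝ)) x i) (z i) ^ 2
      = (x i - z i) ^ 2 := fun i => by rw [Real.dist_eq, euc_symm_apply, sq_abs]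
  simp_rw [this]
  rw [show (1:ℝ) = Real.sqrt 1 by simp, Real.sqrt_le_sqrt_iff (by positivity), Real.sqrt_one]

lemma pfsa_symm (n : ℕ) (t : ℝ) (y : Fin n → ℝ) :
    (MeasurableEquiv.piFinSuccAbove (fun _ : Fin (n+1) => ℝ) 0).symm (t, y) = Fin.cons t y := by
  simp only [MeasurableEquiv.piFinSuccAbove_symm_apply, Fin.insertNthEquiv_zero]
  rfl


lemma mem_cb0 (m : ℕ) (x : Fin (m+1) → ℝ) :
    (MeasurableEquiv.toLp 2 (Fin (m+1) → ℝ)) x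
        ∈ closedBall (0 : EuclideanSpace ℝ (Fin (m+1))) 1
      ↔ x 0 ^ 2 + ∑ i : Fin m, x i.succ ^ 2 ≤ 1 := by
  rw [mem_cb_iff, Fin.sum_univ_succ]
  simp

lemma mem_cb1 (m : ℕ) (x : Fin (m+1) → ℝ) (Δ : ℝ) :
    (MeasurableEquiv.toLp 2 (Fin (m+1) → ℝ)) x
        ∈ closedBall (EuclideanSpace.single (0 : Fin (m+1)) Δ) 1
      ↔ (x 0 - Δ) ^ 2 + ∑ i : Fin m, x i.succ ^ 2 ≤ 1 := by
  rw [mem_cb_iff, Fin.sum_univ_succ]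
  simp [EuclideanSpace.single_apply, Fin.succ_ne_zero]

lemma set_T (n : ℕ) (hd : 0 < n + 1) (Δ : ℝ) :
    (MeasurableEquiv.piFinSuccAbove (fun _ : Fin (n+1) => ℝ) 0).symm ⁻¹'
      ((MeasurableEquiv.toLp 2 (Fin (n+1) → ℝ)) ⁻¹'
        (closedBall (0 : EuclideanSpace ℝ (Fin (n+1))) 1 ∩
          closedBall (EuclideanSpace.single (⟨0, hd⟩ : Fin (n+1)) Δ) 1))
      = {p : ℝ × (Fin n → ℝ) |
          p.1 ^ 2 + ∑ i, p.2 i ^ 2 ≤ 1 ∧ (p.1 - Δ) ^ 2 + ∑ i, p.2 i ^ 2 ≤ 1} := by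
  have hzero : (⟨0, hd⟩ : Fin (n+1)) = 0 := rfl
  rw [hzero]
  ext ⟨t, y⟩
  simp only [Set.mem_preimage, Set.mem_inter_iff, Set.mem_setOf_eq, pfsa_symm,
    mem_cb0, mem_cb1, Fin.cons_zero, Fin.cons_succ]


lemma slice_vol (n : ℕ) {c : ℝ} (hc : 0 ≤ c) :
    volume {y : Fin n → ℝ | ∑ i, y i ^ 2 ≤ c}
      = ENNReal.ofReal (c ^ ((n : ℝ) / 2)) *
        volume (closedBall (0 : EuclideanSpace ℝ (Fin n)) 1) := by
  have hset : {y : Fin n → ℝ | ∑ i, y i ^ 2 ≤ c}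
      = (MeasurableEquiv.toLp 2 (Fin n → ℝ)) ⁻¹' (closedBall 0 (Real.sqrt c)) := by
    ext y
    simp only [Set.mem_preimage, mem_closedBall, Set.mem_setOf_eq]
    have : dist ((MeasurableEquiv.toLp 2 (Fin n → ℝ)) y) 0
        = Real.sqrt (∑ i, y i ^ 2) := by
      rw [EuclideanSpace.dist_eq]
      congr 1
      refine Finset.sum_congr rfl fun i _ => ?_
      rw [Real.dist_eq, euc_symm_apply]
      simp [sq_abs]
    rw [this, Real.sqrt_le_sqrt_iff (by positivity)]
  rw [hset, ← MeasurableEquiv.symm_symm (MeasurableEquiv.toLp 2 (Fin n → ℝ)),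
    MeasurePreserving.measure_preimage
      ((EuclideanSpace.volume_preserving_symm_measurableEquiv_toLp (Fin n)).symm)
      (measurableSet_closedBall.nullMeasurableSet),
    Measure.addHaar_closedBall' _ _ (Real.sqrt_nonneg c),
    finrank_euclideanSpace, Fintype.card_fin]
  congr 2
  rw [Real.sqrt_eq_rpow, ← Real.rpow_natCast (c ^ (1/2 : ℝ)) n, ← Real.rpow_mul hc]
  ring_nf

set_option maxHeartbeats 1000000 in
lemma vol_eq_integral (n : ℕ) (hd : 0 < n + 1) {Δ : ℝ} (hΔ : Δ ∈ Set.Ioo (0:ℝ) 2) :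
    volume (closedBall (0 : EuclideanSpace ℝ (Fin (n+1))) 1 ∩
        closedBall (EuclideanSpace.single (⟨0, hd⟩ : Fin (n+1)) Δ) 1)
      = ENNReal.ofReal (∫ t in Set.Icc (Δ-1) 1,
          (min (1 - t^2) (1 - (t-Δ)^2)) ^ ((n:ℝ)/2)) *
        volume (closedBall (0 : EuclideanSpace ℝ (Fin n)) 1) := by
  obtain ⟨hΔ0, hΔ2⟩ := hΔ
  have hS : MeasurableSet (closedBall (0 : EuclideanSpace ℝ (Fin (n+1))) 1 ∩
      closedBall (EuclideanSpace.single (⟨0, hd⟩ : Fin (n+1)) Δ) 1) :=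
    measurableSet_closedBall.inter measurableSet_closedBall
  set R : ℝ → ℝ := fun t => min (1 - t^2) (1 - (t-Δ)^2) with hRdef
  have hRcont : Continuous R := by
    apply Continuous.min <;> continuity
  have h1 := ((EuclideanSpace.volume_preserving_symm_measurableEquiv_toLp (Fin (n+1))).symm).measure_preimage
      hS.nullMeasurableSet
  rw [MeasurableEquiv.symm_symm] at h1
  have hS1 : MeasurableSet ((MeasurableEquiv.toLp 2 (Fin (n+1) → ℝ)) ⁻¹'
      (closedBall (0 : EuclideanSpace ℝ (Fin (n+1))) 1 ∩
        closedBall (EuclideanSpace.single (⟨0, hd⟩ : Fin (n+1)) Δ) 1)) :=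
    (MeasurableEquiv.toLp 2 (Fin (n+1) → ℝ)).measurable hS
  have h2 := ((volume_preserving_piFinSuccAbove (fun _ : Fin (n+1) => ℝ) 0).symm).measure_preimage
      hS1.nullMeasurableSet
  rw [← h1, ← h2, set_T n hd Δ]
  set T : Set (ℝ × (Fin n → ℝ)) := {p : ℝ × (Fin n → ℝ) |
      p.1 ^ 2 + ∑ i, p.2 i ^ 2 ≤ 1 ∧ (p.1 - Δ) ^ 2 + ∑ i, p.2 i ^ 2 ≤ 1} with hTdef
  have hQm : Measurable fun y : Fin n → ℝ => ∑ i, y i ^ 2 :=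
    Finset.measurable_sum Finset.univ fun i _ => (measurable_pi_apply i).pow_const 2
  have hT : MeasurableSet T := by
    apply MeasurableSet.inter
    · exact measurableSet_le ((measurable_fst.pow_const 2).add (hQm.comp measurable_snd))
        measurable_const
    · exact measurableSet_le (((measurable_fst.sub measurable_const).pow_const 2).add
        (hQm.comp measurable_snd)) measurable_const
  rw [Measure.volume_eq_prod, Measure.prod_apply hT]
  have hslice : ∀ t : ℝ, volume (Prod.mk t ⁻¹' T)
      = Set.indicator (Set.Icc (Δ-1) 1)
          (fun t => ENNReal.ofReal (R t ^ ((n:ℝ)/2))) t *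
        volume (closedBall (0 : EuclideanSpace ℝ (Fin n)) 1) := by
    intro t
    have hpre : Prod.mk t ⁻¹' T = {y : Fin n → ℝ | ∑ i, y i ^ 2 ≤ R t} := by
      ext y
      simp only [Set.mem_preimage, hTdef, Set.mem_setOf_eq, hRdef, le_min_iff]
      constructor
      · rintro ⟨a, b⟩; constructor <;> linarith
      · rintro ⟨a, b⟩; constructor <;> linarith
    rw [hpre]
    by_cases ht : t ∈ Set.Icc (Δ-1) 1
    · obtain ⟨hta, htb⟩ := ht
      have hR0 : 0 ≤ R t := by
        rw [hRdef]
        apply le_min <;> nlinarith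
      rw [slice_vol n hR0, Set.indicator_of_mem (Set.mem_Icc.mpr ⟨hta, htb⟩)]
    · have hRneg : R t < 0 := by
        rw [Set.mem_Icc, not_and_or, not_le, not_le] at ht
        rcases ht with h | h
        · exact lt_of_le_of_lt (min_le_right _ _) (by nlinarith)
        · exact lt_of_le_of_lt (min_le_left _ _) (by nlinarith)
      have hempty : {y : Fin n → ℝ | ∑ i, y i ^ 2 ≤ R t} = ∅ := by
        ext y
        simp only [Set.mem_setOf_eq, Set.mem_empty_iff_false, iff_false, not_le]
        exact lt_of_lt_of_le hRneg (by positivity)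
      rw [hempty, measure_empty, Set.indicator_of_notMem ht, zero_mul]
  simp_rw [hslice]
  have hmeas : Measurable fun t : ℝ => ENNReal.ofReal (R t ^ ((n:ℝ)/2)) :=
    ENNReal.measurable_ofReal.comp
      (((cont_rpow_const (by positivity : (0:ℝ) ≤ (n:ℝ)/2)).comp hRcont).measurable)
  rw [lintegral_mul_const _ (hmeas.indicator measurableSet_Icc),
    lintegral_indicator measurableSet_Icc _]
  congr 1
  rw [← MeasureTheory.ofReal_integral_eq_lintegral_ofReal]
  · exact (((cont_rpow_const (by positivity : (0:ℝ) ≤ (n:ℝ)/2)).comp hRcont).integrableOn_Icc)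
  · refine (ae_restrict_iff' measurableSet_Icc).2 (Filter.Eventually.of_forall fun t ht => ?_)
    obtain ⟨hta, htb⟩ := ht
    have hR0 : 0 ≤ R t := by
      rw [hRdef]; apply le_min <;> nlinarith
    exact Real.rpow_nonneg hR0 _

lemma V1_formula (n : ℕ) (hd : 0 < n + 1) {Δ : ℝ} (hΔ : Δ ∈ Set.Ioo (0:ℝ) 2) :
    V₁ (n+1) hd Δ = 2 * unitBallVol n * ∫ t in (Δ/2)..1, (1 - t^2) ^ ((n:ℝ)/2) := by
  obtain ⟨hΔ0, hΔ2⟩ := hΔ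
  have hcont : Continuous fun t : ℝ => (min (1 - t^2) (1 - (t-Δ)^2)) ^ ((n:ℝ)/2) :=
    (cont_rpow_const (by positivity : (0:ℝ) ≤ (n:ℝ)/2)).comp
      (Continuous.min (by continuity) (by continuity))
  have hnonneg : 0 ≤ ∫ t in Set.Icc (Δ-1) 1, (min (1 - t^2) (1 - (t-Δ)^2)) ^ ((n:ℝ)/2) := by
    refine setIntegral_nonneg measurableSet_Icc fun t ht => ?_
    obtain ⟨hta, htb⟩ := ht
    exact Real.rpow_nonneg (le_min (by nlinarith) (by nlinarith)) _
  rw [V₁, vol_eq_integral n hd ⟨hΔ0, hΔ2⟩, ENNReal.toReal_mul, ENNReal.toReal_ofReal hnonneg]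
  rw [show unitBallVol n = (volume (closedBall (0 : EuclideanSpace ℝ (Fin n)) 1)).toReal from rfl]
  rw [show (∫ t in Set.Icc (Δ-1) 1, (min (1 - t^2) (1 - (t-Δ)^2)) ^ ((n:ℝ)/2))
      = ∫ t in (Δ-1)..1, (min (1 - t^2) (1 - (t-Δ)^2)) ^ ((n:ℝ)/2) by
    rw [MeasureTheory.integral_Icc_eq_integral_Ioc,
      intervalIntegral.integral_of_le (by linarith : Δ - 1 ≤ 1)]]
  have hsplit := intervalIntegral.integral_add_adjacent_intervals
    (a := Δ - 1) (b := Δ/2) (c := 1) (μ := volume)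
    (hcont.intervalIntegrable _ _) (hcont.intervalIntegrable _ _)
  rw [← hsplit]
  have hp2 : (∫ t in (Δ/2)..1, (min (1 - t^2) (1 - (t-Δ)^2)) ^ ((n:ℝ)/2))
      = ∫ t in (Δ/2)..1, (1 - t^2) ^ ((n:ℝ)/2) := by
    refine intervalIntegral.integral_congr fun t ht => ?_
    rw [Set.uIcc_of_le (by linarith : Δ/2 ≤ 1)] at ht
    obtain ⟨hta, htb⟩ := ht
    rw [min_eq_left (by nlinarith)]
  have hp1 : (∫ t in (Δ-1)..(Δ/2), (min (1 - t^2) (1 - (t-Δ)^2)) ^ ((n:ℝ)/2))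
      = ∫ t in (Δ/2)..1, (1 - t^2) ^ ((n:ℝ)/2) := by
    have : (∫ t in (Δ-1)..(Δ/2), (min (1 - t^2) (1 - (t-Δ)^2)) ^ ((n:ℝ)/2))
        = ∫ t in (Δ-1)..(Δ/2), (1 - (Δ - t)^2) ^ ((n:ℝ)/2) := by
      refine intervalIntegral.integral_congr fun t ht => ?_
      rw [Set.uIcc_of_le (by linarith : Δ - 1 ≤ Δ/2)] at ht
      obtain ⟨hta, htb⟩ := ht
      rw [min_eq_right (by nlinarith), show 1 - (t-Δ)^2 = 1 - (Δ-t)^2 by ring]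
    rw [this, intervalIntegral.integral_comp_sub_left
        (fun u => (1 - u^2) ^ ((n:ℝ)/2)) Δ,
      show Δ - Δ/2 = Δ/2 by ring, show Δ - (Δ-1) = 1 by ring]
  rw [hp1, hp2]
  ring

/-- For every `Δ ∈ (0, 2)` the function `V₁` is differentiable at `Δ` with derivative
`V₁'(Δ) = -ω_{d-1} (1 - Δ²/4)^{(d-1)/2}`. -/
theorem hasDerivAt_vol_inter_unit_balls {d : ℕ} (hd : 0 < d) (Δ : ℝ)
    (hΔ : Δ ∈ Set.Ioo (0:ℝ) 2) :
    HasDerivAt (V₁ d hd)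
      (-(unitBallVol (d - 1)) * (1 - Δ ^ 2 / 4) ^ (((d : ℝ) - 1) / 2)) Δ := by
  obtain ⟨n, rfl⟩ : ∃ n, d = n + 1 := ⟨d - 1, (Nat.succ_pred_eq_of_pos hd).symm⟩
  obtain ⟨hΔ0, hΔ2⟩ := hΔ
  set p : ℝ := (n : ℝ) / 2 with hpdef
  set f : ℝ → ℝ := fun t => (1 - t ^ 2) ^ p with hfdef
  have hfcont : Continuous f := (cont_rpow_const (by positivity)).comp (by continuity)
  have h1 : HasDerivAt (fun a : ℝ => ∫ t in a..1, f t) (-(f (Δ/2))) (Δ/2) :=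
    intervalIntegral.integral_hasDerivAt_left (hfcont.intervalIntegrable _ _)
      (hfcont.stronglyMeasurableAtFilter _ _) hfcont.continuousAt
  have h2 : HasDerivAt (fun x : ℝ => x / 2) (1/2) Δ := (hasDerivAt_id Δ).div_const 2
  have h3 := (h1.comp Δ h2).const_mul (2 * unitBallVol n)
  have hG : HasDerivAt (fun Δ => 2 * unitBallVol n * ∫ t in (Δ/2)..1, f t)
      (2 * unitBallVol n * (-(f (Δ/2)) * (1/2))) Δ := h3
  have hfinal := hG.congr_of_eventuallyEq
    (Filter.eventuallyEq_of_mem (Ioo_mem_nhds hΔ0 hΔ2)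
      (fun x hx => V1_formula n hd hx) :
      V₁ (n+1) hd =ᶠ[nhds Δ] fun Δ => 2 * unitBallVol n * ∫ t in (Δ/2)..1, f t)
  convert hfinal using 1
  case e'_4 => rfl
  case e'_5 => rfl
  have hfval : f (Δ/2) = (1 - Δ^2/4) ^ p := by
    rw [hfdef]
    norm_num
    rw [show 1 - (Δ/2)^2 = 1 - Δ^2/4 by ring]
  have hω : n + 1 - 1 = n := rfl
  rw [hω, show (((n+1 : ℕ)) : ℝ) - 1 = (n : ℝ) by push_cast; ring, hfval]
  show -(unitBallVol n) * (1 - Δ^2/4) ^ ((n:ℝ)/2) = _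
  rw [hpdef]
  ring
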